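/- Let d ≥ 4 be an integer, m an integer with 1 ≤ m < d/2, and α ∈ [d-m, d). Set κ = (d - α)/(2(d-m)) and let μ be the restriction of Lebesgue measure on ℝ^d to the set Λ defined in the context. Then there exist constants 0 < c₀ ≤ C₀ depending only on d, m, α such that for all R ≥ 2, c₀ R^{α-d} ≤ c_α(μ) ≤ C₀ R^{α-d}, where c_α(μ) := sup over x ∈ ℝ^d and r > 0 of μ(B(x,r))/r^α. -/

import Mathlib

open MeasureTheory Metric Real
open scoped ENNReal

/-- The vector in `ℝ^n` with integer coordinates `ℓ`. -/
noncomputable def intVec {n : ℕ} (ℓ : Fin n → ℤ) : EuclideanSpace ℝ (Fin n) :=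
  (EuclideanSpace.equiv (Fin n) ℝ).symm fun i => (ℓ i : ℝ)

/-- The first `m` coordinates `x'` of a vector `x ∈ ℝ^n`. -/
noncomputable def headV {n : ℕ} (m : ℕ) (h : m ≤ n) (x : EuclideanSpace ℝ (Fin n)) :
    EuclideanSpace ℝ (Fin m) :=
  (EuclideanSpace.equiv (Fin m) ℝ).symm fun i => x (Fin.castLE h i)

/-- The last `n - m` coordinates `x''` of a vector `x ∈ ℝ^n`. -/
noncomputable def tailV {n : ℕ} (m : ℕ) (x : EuclideanSpace ℝ (Fin n)) :
    EuclideanSpace ℝ (Fin (n - m)) :=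
  (EuclideanSpace.equiv (Fin (n - m)) ℝ).symm fun i =>
    x ⟨m + i, by have := i.isLt; omega⟩

/-- The set `Ω = [B^m(0, cR^{-1/2}) × (Γ + B^{d-m}(0, cR^{-1}))] ∩ S^{d-1}`, where
`Γ = {ω ∈ S^{d-m-1} : R^κ ω ∈ 2πℤ^{d-m}}` and `c = 1/1000`. -/
noncomputable def OmegaS (d m : ℕ) (h : m ≤ d) (κ R : ℝ) :
    Set (EuclideanSpace ℝ (Fin d)) :=
  {ξ | ξ ∈ sphere (0 : EuclideanSpace ℝ (Fin d)) 1 ∧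
    ‖headV m h ξ‖ < (1 / 1000) * R ^ (-(1 : ℝ) / 2) ∧
    ∃ n : Fin (d - m) → ℤ,
      ‖(2 * π * R ^ (-κ)) • intVec n‖ = 1 ∧
      ‖tailV m ξ - (2 * π * R ^ (-κ)) • intVec n‖ < (1 / 1000) * R ^ (-(1 : ℝ))}

/-- The set `Λ = [B^m(0, cR^{-1/2}) × (R^{κ-1}ℤ^{d-m} + B^{d-m}(0, cR^{-1}))] ∩ B^d(0,1)`,
with `c = 1/1000`. -/
noncomputable def LambdaS (d m : ℕ) (h : m ≤ d) (κ R : ℝ) :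
    Set (EuclideanSpace ℝ (Fin d)) :=
  {x | x ∈ ball (0 : EuclideanSpace ℝ (Fin d)) 1 ∧
    ‖headV m h x‖ < (1 / 1000) * R ^ (-(1 : ℝ) / 2) ∧
    ∃ ℓ : Fin (d - m) → ℤ,
      ‖tailV m x - R ^ (κ - 1) • intVec ℓ‖ < (1 / 1000) * R ^ (-(1 : ℝ))}

/-- `c_α(μ) = sup_{x, r>0} μ(B(x,r)) / r^α`, valued in `ℝ≥0∞`. -/
noncomputable def cAlpha {d : ℕ} (α : ℝ) (μ : Measure (EuclideanSpace ℝ (Fin d))) : ℝ≥0∞ :=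
  ⨆ (x : EuclideanSpace ℝ (Fin d)) (r : ℝ) (_ : 0 < r),
    μ (ball x r) / ENNReal.ofReal (r ^ α)

lemma headV_apply {n m : ℕ} (h : m ≤ n) (x : EuclideanSpace ℝ (Fin n)) (i : Fin m) :
    headV m h x i = x (Fin.castLE h i) := rfl

lemma tailV_apply {n m : ℕ} (x : EuclideanSpace ℝ (Fin n)) (i : Fin (n - m)) :
    tailV m x i = x ⟨m + i, by have := i.isLt; omega⟩ := rfl

lemma headV_sub {n m : ℕ} (h : m ≤ n) (x y : EuclideanSpace ℝ (Fin n)) :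
    headV m h (x - y) = headV m h x - headV m h y := rfl

lemma tailV_sub {n m : ℕ} (x y : EuclideanSpace ℝ (Fin n)) :
    tailV m (x - y) = tailV m x - tailV m y := rfl

lemma abs_coord_le_norm {n : ℕ} (v : EuclideanSpace ℝ (Fin n)) (i : Fin n) : |v i| ≤ ‖v‖ := by
  rw [EuclideanSpace.norm_eq]
  simp only [Real.norm_eq_abs, sq_abs]
  rw [← Real.sqrt_sq_eq_abs]
  apply Real.sqrt_le_sqrt
  exact Finset.single_le_sum (f := fun j => v j ^ 2) (fun j _ => sq_nonneg _) (Finset.mem_univ i)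

lemma norm_comp_le {n k : ℕ} (f : Fin k → Fin n) (hf : Function.Injective f)
    (v : EuclideanSpace ℝ (Fin n)) :
    ‖(EuclideanSpace.equiv (Fin k) ℝ).symm (fun i => v (f i))‖ ≤ ‖v‖ := by
  rw [EuclideanSpace.norm_eq, EuclideanSpace.norm_eq]
  simp only [Real.norm_eq_abs, sq_abs]
  apply Real.sqrt_le_sqrt
  have : ∀ i : Fin k, ((EuclideanSpace.equiv (Fin k) ℝ).symm (fun i => v (f i))) i = v (f i) :=
    fun _ => rfl
  simp_rw [this]
  calc ∑ i, v (f i) ^ 2 = ∑ j ∈ Finset.univ.image f, v j ^ 2 := by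
        rw [Finset.sum_image (fun a _ b _ h => hf h)]
    _ ≤ ∑ j, v j ^ 2 := Finset.sum_le_sum_of_subset_of_nonneg (Finset.subset_univ _)
        (fun j _ _ => sq_nonneg _)

lemma norm_headV_le {n m : ℕ} (h : m ≤ n) (v : EuclideanSpace ℝ (Fin n)) :
    ‖headV m h v‖ ≤ ‖v‖ :=
  norm_comp_le (Fin.castLE h) (Fin.castLE_injective h) v

lemma norm_tailV_le {n m : ℕ} (v : EuclideanSpace ℝ (Fin n)) :
    ‖tailV m v‖ ≤ ‖v‖ :=
  norm_comp_le (fun i : Fin (n - m) => (⟨m + i, by have := i.isLt; omega⟩ : Fin n))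
    (fun a b hab => by simpa [Fin.ext_iff] using hab) v

lemma cardIcc_le (a b : ℝ) (hab : a ≤ b) :
    ((Finset.Icc ⌈a⌉ ⌊b⌋).card : ℝ) ≤ b - a + 1 := by
  have h1 := Int.le_ceil a
  have h2 := Int.floor_le b
  rcases le_or_gt ⌈a⌉ ⌊b⌋ with h | h
  · rw [Int.card_Icc]
    have hnn : (0:ℤ) ≤ ⌊b⌋ + 1 - ⌈a⌉ := by omega
    have h3 : (((⌊b⌋ + 1 - ⌈a⌉).toNat : ℕ) : ℝ) = (⌊b⌋:ℝ) + 1 - ⌈a⌉ := by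
      rw [← Int.cast_natCast, Int.toNat_of_nonneg hnn]; push_cast; ring
    rw [h3]
    linarith
  · rw [Finset.Icc_eq_empty (by exact fun hc => absurd hc (not_le.mpr h))]
    simp
    linarith
lemma splitMP {d m : ℕ} (h : m ≤ d) :
    MeasurePreserving (fun y : EuclideanSpace ℝ (Fin d) => (headV m h y, tailV m y))
      volume volume := by
  have hd : d = m + (d - m) := by omega
  let f : Fin d ≃ Fin m ⊕ Fin (d - m) := (finCongr hd).trans finSumFinEquiv.symm
  have h1 := EuclideanSpace.volume_preserving_symm_measurableEquiv_toLp (ι := Fin d)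
  have h2 := volume_measurePreserving_piCongrLeft (fun _ : Fin m ⊕ Fin (d-m) => ℝ) f
  have h3 := volume_measurePreserving_sumPiEquivProdPi (fun _ : Fin m ⊕ Fin (d-m) => ℝ)
  have h4 := ((EuclideanSpace.volume_preserving_symm_measurableEquiv_toLp (ι := Fin m)).symm).prod
      ((EuclideanSpace.volume_preserving_symm_measurableEquiv_toLp (ι := Fin (d-m))).symm)
  have hcomp := (h4.comp (h3.comp (h2.comp h1)))
  convert hcomp using 1
  · exact MeasurableSpace.ext fun _ => Iff.rfl
  · rfl
  funext y
  simp only [Function.comp_apply]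
  ext i
  · simp [headV, MeasurableEquiv.piCongrLeft, Equiv.piCongrLeft, f,
      MeasurableEquiv.sumPiEquivProdPi, Equiv.sumPiEquivProdPi,
      Equiv.piCongrLeft',
      EuclideanSpace.equiv, finSumFinEquiv, Fin.castLE]
    exact (eq_rec_constant _ _).symm
  · simp [tailV, MeasurableEquiv.piCongrLeft, Equiv.piCongrLeft, f,
      MeasurableEquiv.sumPiEquivProdPi, Equiv.sumPiEquivProdPi,
      Equiv.piCongrLeft',
      EuclideanSpace.equiv, finSumFinEquiv]
    exact (eq_rec_constant _ _).symm
  exact Measure.volume_eq_prod _ _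

lemma volume_split {d m : ℕ} (h : m ≤ d) {A : Set (EuclideanSpace ℝ (Fin m))}
    {B : Set (EuclideanSpace ℝ (Fin (d - m)))} (hA : MeasurableSet A) (hB : MeasurableSet B) :
    volume {y : EuclideanSpace ℝ (Fin d) | headV m h y ∈ A ∧ tailV m y ∈ B} =
      volume A * volume B := by
  have : {y : EuclideanSpace ℝ (Fin d) | headV m h y ∈ A ∧ tailV m y ∈ B} =
      (fun y : EuclideanSpace ℝ (Fin d) => (headV m h y, tailV m y)) ⁻¹' (A ×ˢ B) := rfl
  rw [this, (splitMP h).measure_preimage (hA.prod hB).nullMeasurableSet]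
  rw [Measure.volume_eq_prod, Measure.prod_prod]

-- ball volume
example (k : ℕ) (hk : 1 ≤ k) (x : EuclideanSpace ℝ (Fin k)) (r : ℝ) (hr : 0 ≤ r) :
    volume (ball x r) = ENNReal.ofReal (r ^ k) * volume (ball (0 : EuclideanSpace ℝ (Fin k)) 1) := by
  haveI : Nonempty (Fin k) := ⟨⟨0, hk⟩⟩
  haveI : Nontrivial (EuclideanSpace ℝ (Fin k)) := inferInstance
  rw [Measure.addHaar_ball volume x hr, finrank_euclideanSpace_fin]
set_option maxHeartbeats 1000000 in
lemma keyIneq (d m : ℕ) (hd : 4 ≤ d) (hm1 : 1 ≤ m) (hm2 : 2 * m < d)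
    (α κ : ℝ) (hα1 : (d : ℝ) - m ≤ α) (hα2 : α < d)
    (hκ : 0 < κ) (hκd : κ * ((d:ℝ) - m) = ((d:ℝ) - α) / 2)
    (R r : ℝ) (hR : 2 ≤ R) (hr : 0 < r) :
    (2*(r + (1/1000)*R^(-(1:ℝ)))*R^(1-κ) + 1)^(d-m)
      * (min r ((1/1000)*R^(-(1:ℝ)/2)))^m
      * (min r ((1/1000)*R^(-(1:ℝ))))^(d-m)
      ≤ 5000^d * R^(α-(d:ℝ)) * r^α := by
  have hR0 : (0:ℝ) < R := by linarith
  have hR1 : (1:ℝ) ≤ R := by linarith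
  set P : ℝ := (1/1000)*R^(-(1:ℝ)) with hPdef
  set Q : ℝ := (1/1000)*R^(-(1:ℝ)/2) with hQdef
  have hP0 : 0 < P := by positivity
  have hQ0 : 0 < Q := by positivity
  have hmd : m < d := by omega
  have hdmR : ((d - m : ℕ) : ℝ) = (d:ℝ) - m := by
    push_cast [Nat.cast_sub hmd.le]; ring
  have hαm : (m:ℝ) ≤ α := by
    have h2m : ((2*m+1 : ℕ) : ℝ) ≤ (d:ℝ) := by exact_mod_cast Nat.succ_le_of_lt hm2
    push_cast at h2m
    linarith
  have hdα0 : (0:ℝ) < (d:ℝ) - α := by linarith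
  have hRR : R^(κ-1) * R^(1-κ) = 1 := by
    rw [← Real.rpow_add hR0]; norm_num
  have hpos1κ : (0:ℝ) < R^(1-κ) := Real.rpow_pos_of_pos hR0 _
  have hRκle : R^(-κ) ≤ 1 := Real.rpow_le_one_of_one_le_of_nonpos hR1 (by linarith)
  have hPow : P ^ ((d:ℝ)-α) ≤ R^(α-(d:ℝ)) := by
    have e1 : P ^ ((d:ℝ)-α) = (1/1000:ℝ)^((d:ℝ)-α) * R^(α-(d:ℝ)) := by
      rw [hPdef, Real.mul_rpow (by norm_num) (Real.rpow_nonneg hR0.le _),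
        ← Real.rpow_mul hR0.le]
      congr 2
      ring
    rw [e1]
    have h2 : (1/1000:ℝ)^((d:ℝ)-α) ≤ 1 :=
      Real.rpow_le_one (by norm_num) (by norm_num) hdα0.le
    have h3 : (0:ℝ) ≤ R^(α-(d:ℝ)) := Real.rpow_nonneg hR0.le _
    nlinarith
  have hQow : Q ^ ((d:ℝ)-α) ≤ R^((α-(d:ℝ))/2) := by
    have e1 : Q ^ ((d:ℝ)-α) = (1/1000:ℝ)^((d:ℝ)-α) * R^((α-(d:ℝ))/2) := by
      rw [hQdef, Real.mul_rpow (by norm_num) (Real.rpow_nonneg hR0.le _),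
        ← Real.rpow_mul hR0.le]
      congr 2
      ring
    rw [e1]
    have h2 : (1/1000:ℝ)^((d:ℝ)-α) ≤ 1 :=
      Real.rpow_le_one (by norm_num) (by norm_num) hdα0.le
    have h3 : (0:ℝ) ≤ R^((α-(d:ℝ))/2) := Real.rpow_nonneg hR0.le _
    nlinarith
  have hconst : ∀ a : ℝ, 0 < a → a ≤ 5 → a^(d-m) ≤ (5000:ℝ)^d := by
    intro a ha ha5
    calc a^(d-m) ≤ 5000^(d-m) := by
          apply pow_le_pow_left₀ ha.le (by linarith)
      _ ≤ (5000:ℝ)^d := pow_le_pow_right₀ (by norm_num) (by omega)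
  have hminQ0 : 0 < min r Q := lt_min hr hQ0
  have hminP0 : 0 < min r P := lt_min hr hP0
  rcases le_total r P with hA | hBC
  · -- Case A : r ≤ P
    have hRmulA : R^(-(1:ℝ)) * R^(1-κ) = R^(-κ) := by
      rw [← Real.rpow_add hR0]; congr 1; ring
    have hN2 : 2*(r + P)*R^(1-κ) + 1 ≤ 2 := by
      have h1 : 2*(r+P)*R^(1-κ) ≤ (4/1000) * R^(-κ) := by
        have e2 : 2*(P+P)*R^(1-κ) = (4/1000) * R^(-κ) := by
          rw [hPdef, ← hRmulA]; ring
        rw [← e2]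
        exact mul_le_mul_of_nonneg_right (by linarith) hpos1κ.le
      linarith [hRκle]
    calc (2*(r + P)*R^(1-κ) + 1)^(d-m) * (min r Q)^m * (min r P)^(d-m)
        ≤ 2^(d-m) * r^m * r^(d-m) := by
          gcongr <;> first | exact hN2 | exact min_le_left _ _ | exact min_le_right _ _ | positivity
      _ = 2^(d-m) * (r^α * r^((d:ℝ)-α)) := by
          rw [mul_assoc, ← pow_add]
          congr 1
          rw [show m + (d-m) = d by omega, ← Real.rpow_natCast r d, ← Real.rpow_add hr]
          congr 1
          ring
      _ ≤ 5000^d * (r^α * R^(α-(d:ℝ))) := by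
          gcongr <;> first
          | exact hconst 2 (by norm_num) (by norm_num)
          | positivity
          | calc r^((d:ℝ)-α) ≤ P^((d:ℝ)-α) := Real.rpow_le_rpow hr.le hA hdα0.le
              _ ≤ R^(α-(d:ℝ)) := hPow
      _ = 5000^d * R^(α-(d:ℝ)) * r^α := by ring
  rcases le_total r (R^(κ-1)) with hB | hC
  · -- Case B : P ≤ r ≤ R^(κ-1)
    have hN5 : 2*(r + P)*R^(1-κ) + 1 ≤ 5 := by
      calc 2*(r + P)*R^(1-κ) + 1 ≤ (4*R^(κ-1))*R^(1-κ) + 1 :=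
            add_le_add_left (mul_le_mul_of_nonneg_right (by linarith) hpos1κ.le) 1
        _ = 4*(R^(κ-1)*R^(1-κ)) + 1 := by ring
        _ = 5 := by rw [hRR]; norm_num
    have key : (r:ℝ)^m * P^(d-m) ≤ r^α * R^(α-(d:ℝ)) := by
      have e1 : (r:ℝ)^m * P^(d-m) = r^α * (r^((m:ℝ)-α) * P^((d:ℝ)-(m:ℝ))) := by
        have h5 : α + ((m:ℝ)-α) = (m:ℝ) := by ring
        rw [← Real.rpow_natCast r m, ← h5, Real.rpow_add hr, ← Real.rpow_natCast P (d-m), hdmR]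
        ring
      rw [e1]
      have h2 : r^((m:ℝ)-α) ≤ P^((m:ℝ)-α) :=
        Real.rpow_le_rpow_of_nonpos hP0 hBC (by linarith)
      have h3 : P^((m:ℝ)-α) * P^((d:ℝ)-(m:ℝ)) = P^((d:ℝ)-α) := by
        rw [← Real.rpow_add hP0]; congr 1; ring
      calc r^α * (r^((m:ℝ)-α) * P^((d:ℝ)-(m:ℝ)))
          ≤ r^α * (P^((m:ℝ)-α) * P^((d:ℝ)-(m:ℝ))) := by
            gcongr <;> first | exact h2 | positivity
        _ = r^α * P^((d:ℝ)-α) := by rw [h3]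
        _ ≤ r^α * R^(α-(d:ℝ)) := by
            gcongr <;> first | exact hPow | positivity
    calc (2*(r + P)*R^(1-κ) + 1)^(d-m) * (min r Q)^m * (min r P)^(d-m)
        ≤ 5^(d-m) * r^m * P^(d-m) := by
          gcongr <;> first | exact hN5 | exact min_le_left _ _ | exact min_le_right _ _ | positivity
      _ = 5^(d-m) * (r^m * P^(d-m)) := by ring
      _ ≤ 5^(d-m) * (r^α * R^(α-(d:ℝ))) :=
          mul_le_mul_of_nonneg_left key (by positivity)
      _ ≤ 5000^d * (r^α * R^(α-(d:ℝ))) :=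
          mul_le_mul_of_nonneg_right (hconst 5 (by norm_num) le_rfl) (by positivity)
      _ = 5000^d * R^(α-(d:ℝ)) * r^α := by ring
  · -- Case C : R^(κ-1) ≤ r
    have hrR1 : 1 ≤ r * R^(1-κ) := by
      have h := mul_le_mul_of_nonneg_right hC hpos1κ.le
      rw [hRR] at h
      exact h
    have hPR : P * R^(1-κ) = (1/1000) * R^(-κ) := by
      rw [hPdef, mul_assoc, ← Real.rpow_add hR0]
      congr 2
      ring
    have hN4 : 2*(r + P)*R^(1-κ) + 1 ≤ 4 * (r * R^(1-κ)) := by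
      have e3 : 2*(r+P)*R^(1-κ) + 1 = 2*(r*R^(1-κ)) + 2*((1/1000)*R^(-κ)) + 1 := by
        rw [← hPR]; ring
      rw [e3]
      linarith [hRκle, hrR1]
    have h4P : 4*(r*R^(1-κ))*P ≤ r * R^(-κ) := by
      have e : R^(1-κ) * R^(-(1:ℝ)) = R^(-κ) := by
        rw [← Real.rpow_add hR0]; congr 1; ring
      have e2 : 4*(r*R^(1-κ))*P = (4/1000) * (r * R^(-κ)) := by
        rw [hPdef, ← e]; ring
      rw [e2]
      linarith [mul_nonneg hr.le (Real.rpow_nonneg hR0.le (-κ))]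
    have hRexp : (R^(-κ))^(d-m) = R^((α-(d:ℝ))/2) := by
      rw [← Real.rpow_natCast (R^(-κ)) (d-m), ← Real.rpow_mul hR0.le, hdmR]
      congr 1
      rw [neg_mul, hκd]
      ring
    have hbound1 : (min r Q)^m * r^(((d:ℝ)-m)-α) ≤ Q^((d:ℝ)-α) := by
      rcases le_total r Q with hrQ | hQr
      · rw [min_eq_left hrQ]
        calc r^m * r^(((d:ℝ)-m)-α) = r^((d:ℝ)-α) := by
              rw [← Real.rpow_natCast r m, ← Real.rpow_add hr]
              congr 1
              ring
          _ ≤ Q^((d:ℝ)-α) := Real.rpow_le_rpow hr.le hrQ hdα0.le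
      · rw [min_eq_right hQr]
        calc Q^m * r^(((d:ℝ)-m)-α) ≤ Q^m * Q^(((d:ℝ)-m)-α) := by
              exact mul_le_mul_of_nonneg_left
                (Real.rpow_le_rpow_of_nonpos hQ0 hQr (by linarith)) (pow_nonneg hQ0.le m)
          _ = Q^((d:ℝ)-α) := by
              rw [← Real.rpow_natCast Q m, ← Real.rpow_add hQ0]
              congr 1
              ring
    have hrexp : (r:ℝ)^(d-m) = r^α * r^(((d:ℝ)-m)-α) := by
      rw [← Real.rpow_natCast r (d-m), hdmR, ← Real.rpow_add hr]
      congr 1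
      ring
    calc (2*(r + P)*R^(1-κ) + 1)^(d-m) * (min r Q)^m * (min r P)^(d-m)
        ≤ (4*(r*R^(1-κ)))^(d-m) * (min r Q)^m * P^(d-m) := by
          gcongr <;> first | exact hN4 | exact min_le_left _ _ | exact min_le_right _ _ | positivity
      _ = (4*(r*R^(1-κ))*P)^(d-m) * (min r Q)^m := by
          rw [mul_pow (4*(r*R^(1-κ))) P (d-m)]; ring
      _ ≤ (r * R^(-κ))^(d-m) * (min r Q)^m := by
          gcongr <;> first | exact h4P | positivity
      _ = (R^((α-(d:ℝ))/2)) * (r^α * ((min r Q)^m * r^(((d:ℝ)-m)-α))) := by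
          rw [mul_pow, hRexp, hrexp]; ring
      _ ≤ (R^((α-(d:ℝ))/2)) * (r^α * Q^((d:ℝ)-α)) := by
          gcongr <;> first | exact hbound1 | positivity
      _ ≤ (R^((α-(d:ℝ))/2)) * (r^α * R^((α-(d:ℝ))/2)) := by
          gcongr <;> first | exact hQow | positivity
      _ = (R^((α-(d:ℝ))/2) * R^((α-(d:ℝ))/2)) * r^α := by ring
      _ = R^(α-(d:ℝ)) * r^α := by
          rw [← Real.rpow_add hR0]
          congr 1
          ring
      _ ≤ 5000^d * R^(α-(d:ℝ)) * r^α := by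
          have h1 : (1:ℝ) ≤ 5000^d := by
            calc (1:ℝ) = 1^d := (one_pow d).symm
              _ ≤ 5000^d := pow_le_pow_left₀ (by norm_num) (by norm_num) d
          have h2 : (0:ℝ) ≤ R^(α-(d:ℝ)) * r^α :=
            mul_nonneg (Real.rpow_nonneg hR0.le _) (Real.rpow_nonneg hr.le _)
          calc R^(α-(d:ℝ)) * r^α = 1 * (R^(α-(d:ℝ)) * r^α) := by ring
            _ ≤ 5000^d * (R^(α-(d:ℝ)) * r^α) := mul_le_mul_of_nonneg_right h1 h2
            _ = 5000^d * R^(α-(d:ℝ)) * r^α := by ring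

lemma euc_vol_ball {k : ℕ} (hk : 1 ≤ k) (a : EuclideanSpace ℝ (Fin k)) {s : ℝ} (hs : 0 ≤ s) :
    volume (ball a s) =
      ENNReal.ofReal (s ^ k) * volume (ball (0 : EuclideanSpace ℝ (Fin k)) 1) := by
  haveI : Nonempty (Fin k) := ⟨⟨0, hk⟩⟩
  haveI : Nontrivial (EuclideanSpace ℝ (Fin k)) := inferInstance
  rw [Measure.addHaar_ball volume a hs, finrank_euclideanSpace_fin]

lemma ball_inter_vol {k : ℕ} (hk : 1 ≤ k) (a b : EuclideanSpace ℝ (Fin k)) {s u : ℝ}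
    (hs : 0 < s) (hu : 0 < u) :
    volume (ball a s ∩ ball b u) ≤
      ENNReal.ofReal ((min s u) ^ k) * volume (ball (0 : EuclideanSpace ℝ (Fin k)) 1) := by
  rcases le_total s u with hsu | hus
  · rw [min_eq_left hsu, ← euc_vol_ball hk a hs.le]
    exact measure_mono Set.inter_subset_left
  · rw [min_eq_right hus, ← euc_vol_ball hk b hu.le]
    exact measure_mono Set.inter_subset_right

set_option maxHeartbeats 1000000 in
lemma ballBound (d m : ℕ) (h : m ≤ d) (hm : 1 ≤ m) (hdm : 1 ≤ d - m) (κ R : ℝ)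
    (hκ : 0 < κ) (hR : 2 ≤ R) (x : EuclideanSpace ℝ (Fin d)) (r : ℝ) (hr : 0 < r) :
    (volume.restrict (LambdaS d m h κ R)) (ball x r) ≤
      ENNReal.ofReal ((2*(r + (1/1000)*R^(-(1:ℝ)))*R^(1-κ) + 1)^(d-m)
        * (min r ((1/1000)*R^(-(1:ℝ)/2)))^m
        * (min r ((1/1000)*R^(-(1:ℝ))))^(d-m)
        * (volume (ball (0 : EuclideanSpace ℝ (Fin m)) 1)).toReal
        * (volume (ball (0 : EuclideanSpace ℝ (Fin (d-m))) 1)).toReal) := by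
  have hR0 : (0:ℝ) < R := by linarith
  set P : ℝ := (1/1000)*R^(-(1:ℝ)) with hPdef
  set Q : ℝ := (1/1000)*R^(-(1:ℝ)/2) with hQdef
  have hP0 : 0 < P := by positivity
  have hQ0 : 0 < Q := by positivity
  set t : EuclideanSpace ℝ (Fin (d - m)) := tailV m x with htdef
  have hr' : (0:ℝ) < r + P := by positivity
  have hRs : (0:ℝ) < R^(1-κ) := Real.rpow_pos_of_pos hR0 _
  have hRR : R^(κ-1) * R^(1-κ) = 1 := by
    rw [← Real.rpow_add hR0]; norm_num
  set lo : Fin (d-m) → ℤ := fun i => ⌈(t i - (r + P)) * R^(1-κ)⌉ with hlodef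
  set hi : Fin (d-m) → ℤ := fun i => ⌊(t i + (r + P)) * R^(1-κ)⌋ with hhidef
  set S : Finset (Fin (d-m) → ℤ) := Fintype.piFinset (fun i => Finset.Icc (lo i) (hi i))
    with hSdef
  set A : Set (EuclideanSpace ℝ (Fin m)) := ball (headV m h x) r ∩ ball 0 Q with hAdef
  set B : (Fin (d-m) → ℤ) → Set (EuclideanSpace ℝ (Fin (d-m))) :=
    fun ℓ => ball t r ∩ ball (R^(κ-1) • intVec ℓ) P with hBdef
  set T : (Fin (d-m) → ℤ) → Set (EuclideanSpace ℝ (Fin d)) :=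
    fun ℓ => {y | headV m h y ∈ A ∧ tailV m y ∈ B ℓ} with hTdef
  -- covering
  have hsub : ball x r ∩ LambdaS d m h κ R ⊆ ⋃ ℓ ∈ S, T ℓ := by
    rintro y ⟨hyb, hy1, hy2, ℓ, hy3⟩
    have hdyx : ‖y - x‖ < r := by
      rw [← dist_eq_norm]; exact mem_ball.mp hyb
    have htail : ‖tailV m y - t‖ < r := by
      rw [htdef, ← tailV_sub]
      exact lt_of_le_of_lt (norm_tailV_le _) hdyx
    have hℓS : ℓ ∈ S := by
      rw [hSdef, Fintype.mem_piFinset]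
      intro i
      have hcoord : |t i - R^(κ-1) * (ℓ i : ℝ)| < r + P := by
        have e1 : |t i - tailV m y i| ≤ ‖t - tailV m y‖ := by
          have : t i - tailV m y i = (t - tailV m y) i := rfl
          rw [this]; exact abs_coord_le_norm _ i
        have e2 : |tailV m y i - R^(κ-1) * (ℓ i : ℝ)| ≤ ‖tailV m y - R^(κ-1) • intVec ℓ‖ := by
          have : tailV m y i - R^(κ-1) * (ℓ i : ℝ) = (tailV m y - R^(κ-1) • intVec ℓ) i := rfl
          rw [this]; exact abs_coord_le_norm _ i
        have e3 : ‖t - tailV m y‖ < r := by rw [norm_sub_rev]; exact htail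
        calc |t i - R^(κ-1) * (ℓ i : ℝ)|
            ≤ |t i - tailV m y i| + |tailV m y i - R^(κ-1) * (ℓ i : ℝ)| := by
              have := abs_sub_abs_le_abs_sub (t i - R^(κ-1) * (ℓ i : ℝ)) 0
              calc |t i - R^(κ-1) * (ℓ i : ℝ)|
                  = |(t i - tailV m y i) + (tailV m y i - R^(κ-1) * (ℓ i : ℝ))| := by ring_nf
                _ ≤ _ := abs_add_le _ _
          _ < r + P := by
              have := lt_of_le_of_lt e2 hy3
              linarith [lt_of_le_of_lt e1 e3]
      have habs := abs_lt.mp hcoord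
      have hval : (ℓ i : ℝ) = (R^(κ-1) * (ℓ i : ℝ)) * R^(1-κ) := by
        rw [mul_comm (R^(κ-1)) ((ℓ i : ℝ)), mul_assoc, hRR, mul_one]
      rw [Finset.mem_Icc]
      constructor
      · rw [hlodef]
        apply Int.ceil_le.mpr
        rw [hval]
        exact mul_le_mul_of_nonneg_right (by linarith) hRs.le
      · rw [hhidef]
        apply Int.le_floor.mpr
        rw [hval]
        exact mul_le_mul_of_nonneg_right (by linarith) hRs.le
    refine Set.mem_biUnion hℓS ?_
    refine ⟨⟨?_, ?_⟩, ?_, ?_⟩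
    · rw [mem_ball, dist_eq_norm, ← headV_sub]
      exact lt_of_le_of_lt (norm_headV_le h _) hdyx
    · rwa [mem_ball_zero_iff]
    · rw [mem_ball, dist_eq_norm]
      exact htail
    · rw [mem_ball, dist_eq_norm]
      exact hy3
  -- cardinality bound
  have cardS : ((S.card : ℕ) : ℝ) ≤ (2*(r + P)*R^(1-κ) + 1)^(d-m) := by
    rw [hSdef, Fintype.card_piFinset]
    push_cast
    calc (∏ i, ((Finset.Icc (lo i) (hi i)).card : ℝ))
        ≤ ∏ i : Fin (d-m), (2*(r + P)*R^(1-κ) + 1) := by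
          apply Finset.prod_le_prod (fun i _ => by positivity)
          intro i _
          have hab : (t i - (r + P)) * R^(1-κ) ≤ (t i + (r + P)) * R^(1-κ) :=
            mul_le_mul_of_nonneg_right (by linarith) hRs.le
          have := cardIcc_le _ _ hab
          rw [hlodef, hhidef]
          calc ((Finset.Icc ⌈(t i - (r + P)) * R^(1-κ)⌉ ⌊(t i + (r + P)) * R^(1-κ)⌋).card : ℝ)
              ≤ (t i + (r + P)) * R^(1-κ) - (t i - (r + P)) * R^(1-κ) + 1 := this
            _ = 2*(r + P)*R^(1-κ) + 1 := by ring
      _ = (2*(r + P)*R^(1-κ) + 1)^(d-m) := by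
          rw [Finset.prod_const, Finset.card_univ, Fintype.card_fin]
  -- volume bounds
  have hVmne : volume (ball (0 : EuclideanSpace ℝ (Fin m)) 1) ≠ ⊤ := measure_ball_lt_top.ne
  have hVdmne : volume (ball (0 : EuclideanSpace ℝ (Fin (d-m))) 1) ≠ ⊤ := measure_ball_lt_top.ne
  set vm : ℝ := (volume (ball (0 : EuclideanSpace ℝ (Fin m)) 1)).toReal with hvmdef
  set vdm : ℝ := (volume (ball (0 : EuclideanSpace ℝ (Fin (d-m))) 1)).toReal with hvdmdef
  have hvm0 : 0 ≤ vm := ENNReal.toReal_nonneg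
  have hvdm0 : 0 ≤ vdm := ENNReal.toReal_nonneg
  have hVm : volume (ball (0 : EuclideanSpace ℝ (Fin m)) 1) = ENNReal.ofReal vm :=
    (ENNReal.ofReal_toReal hVmne).symm
  have hVdm : volume (ball (0 : EuclideanSpace ℝ (Fin (d-m))) 1) = ENNReal.ofReal vdm :=
    (ENNReal.ofReal_toReal hVdmne).symm
  have termBound : ∀ ℓ : Fin (d-m) → ℤ, volume (T ℓ) ≤
      ENNReal.ofReal ((min r Q)^m * vm * ((min r P)^(d-m) * vdm)) := by
    intro ℓ
    have hmeasA : MeasurableSet A := (measurableSet_ball.inter measurableSet_ball)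
    have hmeasB : MeasurableSet (B ℓ) := (measurableSet_ball.inter measurableSet_ball)
    have := volume_split h hmeasA hmeasB
    rw [hTdef]
    calc volume {y : EuclideanSpace ℝ (Fin d) | headV m h y ∈ A ∧ tailV m y ∈ B ℓ}
        = volume A * volume (B ℓ) := this
      _ ≤ (ENNReal.ofReal ((min r Q)^m) * ENNReal.ofReal vm) *
            (ENNReal.ofReal ((min r P)^(d-m)) * ENNReal.ofReal vdm) := by
          apply mul_le_mul'
          · rw [hAdef]
            have := ball_inter_vol hm (headV m h x) 0 hr hQ0
            rwa [hVm] at this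
          · rw [hBdef]
            have := ball_inter_vol hdm t (R^(κ-1) • intVec ℓ) hr hP0
            rwa [hVdm] at this
      _ = ENNReal.ofReal ((min r Q)^m * vm * ((min r P)^(d-m) * vdm)) := by
          rw [← ENNReal.ofReal_mul (by positivity), ← ENNReal.ofReal_mul (by positivity),
            ← ENNReal.ofReal_mul (by positivity)]
  calc (volume.restrict (LambdaS d m h κ R)) (ball x r)
      = volume (ball x r ∩ LambdaS d m h κ R) := Measure.restrict_apply measurableSet_ball
    _ ≤ volume (⋃ ℓ ∈ S, T ℓ) := measure_mono hsub
    _ ≤ ∑ ℓ ∈ S, volume (T ℓ) := measure_biUnion_finset_le S T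
    _ ≤ ∑ _ℓ ∈ S, ENNReal.ofReal ((min r Q)^m * vm * ((min r P)^(d-m) * vdm)) :=
        Finset.sum_le_sum (fun ℓ _ => termBound ℓ)
    _ = (S.card : ℝ≥0∞) * ENNReal.ofReal ((min r Q)^m * vm * ((min r P)^(d-m) * vdm)) := by
        rw [Finset.sum_const, nsmul_eq_mul]
    _ ≤ ENNReal.ofReal ((2*(r + P)*R^(1-κ) + 1)^(d-m)) *
          ENNReal.ofReal ((min r Q)^m * vm * ((min r P)^(d-m) * vdm)) := by
        apply mul_le_mul'
        · rw [← ENNReal.ofReal_natCast]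
          exact ENNReal.ofReal_le_ofReal cardS
        · exact le_rfl
    _ = ENNReal.ofReal ((2*(r + P)*R^(1-κ) + 1)^(d-m)
        * (min r Q)^m * (min r P)^(d-m) * vm * vdm) := by
        rw [← ENNReal.ofReal_mul (by positivity)]
        congr 1
        ring

lemma intVec_zero {n : ℕ} : intVec (fun _ : Fin n => (0:ℤ)) = 0 := by
  ext i
  simp [intVec]

set_option maxHeartbeats 1000000 in
theorem stmt14 (d m : ℕ) (hd : 4 ≤ d) (hm1 : 1 ≤ m) (hm2 : 2 * m < d)
    (α : ℝ) (hα1 : (d : ℝ) - m ≤ α) (hα2 : α < d) :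
    ∃ c₀ C₀ : ℝ, 0 < c₀ ∧ c₀ ≤ C₀ ∧
      ∀ R : ℝ, 2 ≤ R →
        ENNReal.ofReal (c₀ * R ^ (α - d)) ≤
            cAlpha α (volume.restrict
              (LambdaS d m (by omega) (((d : ℝ) - α) / (2 * ((d : ℝ) - m))) R)) ∧
          cAlpha α (volume.restrict
              (LambdaS d m (by omega) (((d : ℝ) - α) / (2 * ((d : ℝ) - m))) R)) ≤
            ENNReal.ofReal (C₀ * R ^ (α - d)) := by
  have h : m ≤ d := by omega
  set κ : ℝ := ((d : ℝ) - α) / (2 * ((d : ℝ) - m)) with hκdef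
  have hmdR : (m:ℝ) < (d:ℝ) := by exact_mod_cast (by omega : m < d)
  have hdmne : (d:ℝ) - (m:ℝ) ≠ 0 := by linarith
  have hdα0 : (0:ℝ) < (d:ℝ) - α := by linarith
  have hα0 : (0:ℝ) ≤ α := by
    have : (0:ℝ) ≤ (d:ℝ) - m := by linarith
    linarith
  have hκ : 0 < κ := by
    rw [hκdef]
    apply div_pos hdα0
    linarith
  have hκd : κ * ((d:ℝ) - m) = ((d:ℝ) - α) / 2 := by
    rw [hκdef]
    field_simp
  have hdm1 : 1 ≤ d - m := by omega
  set vd : ℝ := (volume (ball (0 : EuclideanSpace ℝ (Fin d)) 1)).toReal with hvddef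
  set vm : ℝ := (volume (ball (0 : EuclideanSpace ℝ (Fin m)) 1)).toReal with hvmdef
  set vdm : ℝ := (volume (ball (0 : EuclideanSpace ℝ (Fin (d-m))) 1)).toReal with hvdmdef
  have hvd0 : 0 < vd := ENNReal.toReal_pos (measure_ball_pos _ _ one_pos).ne'
    measure_ball_lt_top.ne
  have hvm0 : 0 ≤ vm := ENNReal.toReal_nonneg
  have hvdm0 : 0 ≤ vdm := ENNReal.toReal_nonneg
  refine ⟨(1/1000:ℝ)^d * vd, 5000^d * (vm * vdm) + (1/1000:ℝ)^d * vd, by positivity,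
    by nlinarith [mul_nonneg (le_of_lt (pow_pos (show (0:ℝ) < 5000 by norm_num) d)) (mul_nonneg hvm0 hvdm0)], ?_⟩
  intro R hR
  have hR0 : (0:ℝ) < R := by linarith
  have hR1 : (1:ℝ) ≤ R := by linarith
  set c₀ : ℝ := (1/1000:ℝ)^d * vd with hc₀def
  set C₀ : ℝ := 5000^d * (vm * vdm) + c₀ with hC₀def
  have hc₀0 : 0 < c₀ := by positivity
  have hC₀0 : 0 < C₀ := by positivity
  constructor
  · -- LOWER BOUND
    set r₀ : ℝ := (1/1000) * R^(-(1:ℝ)) with hr₀def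
    have hr₀ : 0 < r₀ := by positivity
    have hsubΛ : ball (0 : EuclideanSpace ℝ (Fin d)) r₀ ⊆ LambdaS d m (by omega) κ R := by
      intro y hy
      rw [mem_ball_zero_iff] at hy
      have hRinv1 : R^(-(1:ℝ)) ≤ 1 := Real.rpow_le_one_of_one_le_of_nonpos hR1 (by norm_num)
      have hinv : R^(-(1:ℝ)) ≤ R^(-(1:ℝ)/2) :=
        Real.rpow_le_rpow_of_exponent_le hR1 (by norm_num)
      refine ⟨?_, ?_, fun _ => 0, ?_⟩
      · rw [mem_ball_zero_iff]
        calc ‖y‖ < r₀ := hy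
          _ ≤ 1 := by rw [hr₀def]; linarith
      · calc ‖headV m (by omega) y‖ ≤ ‖y‖ := norm_headV_le _ y
          _ < r₀ := hy
          _ ≤ (1/1000) * R^(-(1:ℝ)/2) := by rw [hr₀def]; linarith
      · rw [intVec_zero, smul_zero, sub_zero]
        calc ‖tailV m y‖ ≤ ‖y‖ := norm_tailV_le y
          _ < (1/1000) * R^(-(1:ℝ)) := hy
    have hvol : (volume.restrict (LambdaS d m (by omega) κ R))
          (ball (0 : EuclideanSpace ℝ (Fin d)) r₀)
        = ENNReal.ofReal (r₀^d) * ENNReal.ofReal vd := by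
      rw [Measure.restrict_apply measurableSet_ball, Set.inter_eq_left.mpr hsubΛ,
        euc_vol_ball (by omega) _ hr₀.le, hvddef,
        ENNReal.ofReal_toReal measure_ball_lt_top.ne]
    have hstep : ENNReal.ofReal (c₀ * R ^ (α - (d:ℝ))) ≤
        (volume.restrict (LambdaS d m (by omega) κ R))
            (ball (0 : EuclideanSpace ℝ (Fin d)) r₀) /
          ENNReal.ofReal (r₀ ^ α) := by
      rw [hvol, ← ENNReal.ofReal_mul (by positivity),
        ← ENNReal.ofReal_div_of_pos (Real.rpow_pos_of_pos hr₀ α)]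
      apply ENNReal.ofReal_le_ofReal
      have e : r₀^(d:ℕ) * vd / r₀^α = r₀^((d:ℝ)-α) * vd := by
        rw [Real.rpow_sub hr₀, Real.rpow_natCast]
        ring
      rw [e]
      have e2 : r₀^((d:ℝ)-α) = (1/1000:ℝ)^((d:ℝ)-α) * R^(α-(d:ℝ)) := by
        rw [hr₀def, Real.mul_rpow (by norm_num) (Real.rpow_nonneg hR0.le _),
          ← Real.rpow_mul hR0.le]
        congr 2
        ring
      have e3 : (1/1000:ℝ)^((d:ℕ):ℝ) ≤ (1/1000:ℝ)^((d:ℝ)-α) :=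
        Real.rpow_le_rpow_of_exponent_ge (by norm_num) (by norm_num) (by linarith)
      rw [Real.rpow_natCast] at e3
      calc c₀ * R^(α-(d:ℝ)) = ((1/1000:ℝ)^(d:ℕ) * R^(α-(d:ℝ))) * vd := by
            rw [hc₀def]; ring
        _ ≤ ((1/1000:ℝ)^((d:ℝ)-α) * R^(α-(d:ℝ))) * vd :=
            mul_le_mul_of_nonneg_right
              (mul_le_mul_of_nonneg_right e3 (Real.rpow_nonneg hR0.le _)) hvd0.le
        _ = r₀^((d:ℝ)-α) * vd := by rw [e2]
    refine hstep.trans ?_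
    unfold cAlpha
    refine le_iSup_of_le (0 : EuclideanSpace ℝ (Fin d)) ?_
    refine le_iSup_of_le r₀ ?_
    exact le_iSup_of_le hr₀ le_rfl
  · -- UPPER BOUND
    unfold cAlpha
    refine iSup_le fun x => iSup_le fun r => iSup_le fun hrpos => ?_
    apply ENNReal.div_le_of_le_mul
    rw [← ENNReal.ofReal_mul (mul_nonneg hC₀0.le (Real.rpow_nonneg hR0.le _))]
    refine (ballBound d m (by omega) hm1 hdm1 κ R hκ hR x r hrpos).trans ?_
    apply ENNReal.ofReal_le_ofReal
    rw [← hvmdef, ← hvdmdef]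
    have hkey := keyIneq d m hd hm1 hm2 α κ hα1 hα2 hκ hκd R r hR hrpos
    calc (2*(r + (1/1000)*R^(-(1:ℝ)))*R^(1-κ) + 1)^(d-m)
          * (min r ((1/1000)*R^(-(1:ℝ)/2)))^m
          * (min r ((1/1000)*R^(-(1:ℝ))))^(d-m) * vm * vdm
        ≤ (5000^d * R^(α-(d:ℝ)) * r^α) * vm * vdm :=
          mul_le_mul_of_nonneg_right (mul_le_mul_of_nonneg_right hkey hvm0) hvdm0
      _ = (5000^d*(vm*vdm)) * (R^(α-(d:ℝ)) * r^α) := by ring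
      _ ≤ C₀ * (R^(α-(d:ℝ)) * r^α) := by
          apply mul_le_mul_of_nonneg_right
          · rw [hC₀def]; linarith
          · positivity
      _ = C₀ * R^(α-(d:ℝ)) * r^α := by ring
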